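/- Uniform case: let n bidders have i.i.d. bids uniform on [0,1], and for 0 ≤ k ≤ n let r^k be the reserve vector equal to 1/2 on the first k coordinates and 0 elsewhere. Then the expected eager revenue equals RevE(k) = (n + 2^{−n} − 1)/(n + 1) − (if k < n then 2^{−n}/(n − k + 1) else 0). -/

import Mathlib

open MeasureTheory Finset
open scoped Classical ENNReal

noncomputable def lazyWinner {n : ℕ} (b : Fin (n + 1) → ℝ) : Fin (n + 1) :=
  (Finset.univ.filter fun i => ∀ j, b j ≤ b i).min' (by
    obtain ⟨i, -, hi⟩ := Finset.exists_max_image Finset.univ b ⟨0, Finset.mem_univ 0⟩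
    exact ⟨i, Finset.mem_filter.mpr ⟨Finset.mem_univ i, fun j => hi j (Finset.mem_univ j)⟩⟩)

noncomputable def secondMax {n : ℕ} (b : Fin (n + 1) → ℝ) : ℝ :=
  (Finset.univ.erase (lazyWinner b)).fold max 0 b

/-- Revenue of the second price auction with lazy reserves. -/
noncomputable def lazyRev {n : ℕ} (b r : Fin (n + 1) → ℝ) : ℝ :=
  if r (lazyWinner b) ≤ b (lazyWinner b) then max (r (lazyWinner b)) (secondMax b) else 0

/-- The least-index bidder among those meeting their reserve attaining the highest bid. -/
noncomputable def eagerWinner {n : ℕ} (b r : Fin (n + 1) → ℝ)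
    (hS : (Finset.univ.filter fun i => r i ≤ b i).Nonempty) : Fin (n + 1) :=
  ((Finset.univ.filter fun i => r i ≤ b i).filter
      fun i => ∀ k ∈ Finset.univ.filter (fun i => r i ≤ b i), b k ≤ b i).min' (by
    obtain ⟨i, hi, hmax⟩ := Finset.exists_max_image _ b hS
    exact ⟨i, Finset.mem_filter.mpr ⟨hi, hmax⟩⟩)

/-- Revenue of the second price auction with eager reserves. -/
noncomputable def eagerRev {n : ℕ} (b r : Fin (n + 1) → ℝ) : ℝ :=
  if hS : (Finset.univ.filter fun i => r i ≤ b i).Nonempty then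
    max (r (eagerWinner b r hS))
      (((Finset.univ.filter fun i => r i ≤ b i).erase (eagerWinner b r hS)).fold max 0 b)
  else 0

section aux
variable {n : ℕ} {b r : Fin (n+1) → ℝ}

lemma eagerWinner_mem (hS : (Finset.univ.filter fun i => r i ≤ b i).Nonempty) :
    r (eagerWinner b r hS) ≤ b (eagerWinner b r hS) ∧
      ∀ l, r l ≤ b l → b l ≤ b (eagerWinner b r hS) := by
  have h := Finset.min'_mem ((Finset.univ.filter fun i => r i ≤ b i).filter
      fun i => ∀ k ∈ Finset.univ.filter (fun i => r i ≤ b i), b k ≤ b i) (by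
    obtain ⟨i, hi, hmax⟩ := Finset.exists_max_image _ b hS
    exact ⟨i, Finset.mem_filter.mpr ⟨hi, hmax⟩⟩)
  rw [Finset.mem_filter, Finset.mem_filter] at h
  exact ⟨h.1.2, fun l hl => h.2 l (Finset.mem_filter.mpr ⟨Finset.mem_univ l, hl⟩)⟩

lemma r_winner_le_eagerRev (hS : (Finset.univ.filter fun i => r i ≤ b i).Nonempty) :
    r (eagerWinner b r hS) ≤ eagerRev b r := by
  rw [eagerRev, dif_pos hS]; exact le_max_left _ _

lemma le_eagerRev_of_mem (hS : (Finset.univ.filter fun i => r i ≤ b i).Nonempty)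
    {i : Fin (n+1)} (hri : r i ≤ b i) (hne : i ≠ eagerWinner b r hS) :
    b i ≤ eagerRev b r := by
  rw [eagerRev, dif_pos hS]
  refine le_trans ?_ (le_max_right _ _)
  rw [Finset.le_fold_max]
  exact Or.inr ⟨i, Finset.mem_erase.mpr ⟨hne, Finset.mem_filter.mpr ⟨Finset.mem_univ i, hri⟩⟩, le_rfl⟩

lemma eagerRev_le {p : ℝ} (hp : 0 ≤ p) (hrw : ∀ hS, r (eagerWinner b r hS) ≤ p)
    (hsec : ∀ hS, ∀ i, r i ≤ b i → i ≠ eagerWinner b r hS → b i ≤ p) :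
    eagerRev b r ≤ p := by
  rw [eagerRev]
  split_ifs with hS
  · refine max_le (hrw hS) ?_
    rw [Finset.fold_max_le]
    refine ⟨hp, fun x hx => ?_⟩
    rw [Finset.mem_erase, Finset.mem_filter] at hx
    exact hsec hS x hx.2.2 hx.1
  · exact hp

end aux

section chars
variable {n : ℕ} {k : ℕ} {b : Fin (n+1) → ℝ} {p : ℝ}

lemma charLow (hb : ∀ i, 0 ≤ b i) (hp : 0 ≤ p) (hp2 : p < 1/2) :
    eagerRev b (fun i => if (i : ℕ) < k then (1/2 : ℝ) else 0) ≤ p ↔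
      ((∀ i : Fin (n+1), (i:ℕ) < k → b i < 1/2) ∧
       (∀ i j : Fin (n+1), k ≤ (i:ℕ) → k ≤ (j:ℕ) → i ≠ j → b i ≤ p ∨ b j ≤ p)) := by
  set r : Fin (n+1) → ℝ := fun i => if (i : ℕ) < k then (1/2 : ℝ) else 0 with hr
  constructor
  · intro hrev
    have ha : ∀ i : Fin (n+1), (i:ℕ) < k → b i < 1/2 := by
      intro i hik
      by_contra hcon
      push_neg at hcon
      have hri : r i ≤ b i := by simp only [hr, if_pos hik]; exact hcon
      have hS : (Finset.univ.filter fun i => r i ≤ b i).Nonempty :=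
        ⟨i, Finset.mem_filter.mpr ⟨Finset.mem_univ i, hri⟩⟩
      by_cases hiw : i = eagerWinner b r hS
      · have := r_winner_le_eagerRev hS
        rw [← hiw] at this
        have : (1/2 : ℝ) ≤ p := le_trans (by simp [hr, hik]) (le_trans this hrev)
        linarith
      · have := le_trans (le_eagerRev_of_mem hS hri hiw) hrev
        linarith
    refine ⟨ha, fun i j hik hjk hij => ?_⟩
    by_contra hcon
    push_neg at hcon
    have hri : r i ≤ b i := by simp [hr, Nat.not_lt.mpr hik]; exact hb i
    have hrj : r j ≤ b j := by simp [hr, Nat.not_lt.mpr hjk]; exact hb j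
    have hS : (Finset.univ.filter fun i => r i ≤ b i).Nonempty :=
      ⟨i, Finset.mem_filter.mpr ⟨Finset.mem_univ i, hri⟩⟩
    by_cases hiw : i = eagerWinner b r hS
    · have hjw : j ≠ eagerWinner b r hS := fun h => hij (by rw [hiw, h])
      have := le_trans (le_eagerRev_of_mem hS hrj hjw) hrev
      linarith [hcon.2]
    · have := le_trans (le_eagerRev_of_mem hS hri hiw) hrev
      linarith [hcon.1]
  · rintro ⟨ha, hsec⟩
    have huntreated : ∀ i : Fin (n+1), r i ≤ b i → k ≤ (i:ℕ) := by
      intro i hri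
      by_contra hcon
      push_neg at hcon
      have := ha i hcon
      simp [hr, hcon] at hri
      linarith
    refine eagerRev_le hp (fun hS => ?_) (fun hS i hri hiw => ?_)
    · have hw := huntreated _ ((eagerWinner_mem hS).1)
      simp only [hr]; split_ifs with hh
      · exact absurd hh (Nat.not_lt.mpr hw)
      · exact hp
    · have hi := huntreated i hri
      have hw := huntreated _ ((eagerWinner_mem hS).1)
      rcases hsec i _ hi hw hiw with h | h
      · exact h
      · exact le_trans ((eagerWinner_mem hS).2 i hri) h

lemma charHigh (hb : ∀ i, 0 ≤ b i) (hp : (1/2 : ℝ) ≤ p) :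
    eagerRev b (fun i => if (i : ℕ) < k then (1/2 : ℝ) else 0) ≤ p ↔
      ∀ i j : Fin (n+1), i ≠ j → b i ≤ p ∨ b j ≤ p := by
  set r : Fin (n+1) → ℝ := fun i => if (i : ℕ) < k then (1/2 : ℝ) else 0 with hr
  have hrle : ∀ i, r i ≤ 1/2 := by intro i; simp only [hr]; split_ifs <;> norm_num
  constructor
  · intro hrev i j hij
    by_contra hcon
    push_neg at hcon
    have hri : r i ≤ b i := le_trans (hrle i) (le_trans hp hcon.1.le)
    have hrj : r j ≤ b j := le_trans (hrle j) (le_trans hp hcon.2.le)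
    have hS : (Finset.univ.filter fun i => r i ≤ b i).Nonempty :=
      ⟨i, Finset.mem_filter.mpr ⟨Finset.mem_univ i, hri⟩⟩
    by_cases hiw : i = eagerWinner b r hS
    · have hjw : j ≠ eagerWinner b r hS := fun h => hij (by rw [hiw, h])
      have := le_trans (le_eagerRev_of_mem hS hrj hjw) hrev
      linarith [hcon.2]
    · have := le_trans (le_eagerRev_of_mem hS hri hiw) hrev
      linarith [hcon.1]
  · intro hsec
    refine eagerRev_le (by linarith) (fun hS => le_trans (hrle _) hp)
      (fun hS i hri hiw => ?_)
    rcases hsec i _ hiw with h | h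
    · exact h
    · exact le_trans ((eagerWinner_mem hS).2 i hri) h

end chars

section meas
variable {n : ℕ}

lemma meas_fold (s : Finset (Fin (n+1))) :
    Measurable fun b : Fin (n+1) → ℝ => s.fold max 0 b := by
  induction s using Finset.induction with
  | empty => simpa [Finset.fold_empty] using measurable_const
  | @insert a s h ih =>
      simp_rw [Finset.fold_insert h]
      exact (measurable_pi_apply a).max ih

lemma meas_iff_set {P : (Fin (n+1) → ℝ) → Prop} (hP : MeasurableSet {b | P b}) (c : Prop) :
    MeasurableSet {b | c ↔ P b} := by
  by_cases hc : c
  · have he : {b | c ↔ P b} = {b | P b} := by ext b; simp [hc]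
    rw [he]; exact hP
  · have he : {b | c ↔ P b} = {b | P b}ᶜ := by ext b; simp [hc]
    rw [he]; exact hP.compl

lemma measurable_eagerRev (r : Fin (n+1) → ℝ) :
    Measurable fun b : Fin (n+1) → ℝ => eagerRev b r := by
  classical
  set F : (Fin (n+1) → ℝ) → Finset (Fin (n+1)) := fun b => Finset.univ.filter fun i => r i ≤ b i with hF
  set f : Finset (Fin (n+1)) → Finset (Fin (n+1)) → (Fin (n+1) → ℝ) → ℝ := fun T W b =>
    if hW : W.Nonempty then max (r (W.min' hW)) ((T.erase (W.min' hW)).fold max 0 b) else 0 with hf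
  set E : Finset (Fin (n+1)) → Finset (Fin (n+1)) → Set (Fin (n+1) → ℝ) := fun T W =>
    {b | F b = T ∧ T.filter (fun i => ∀ l ∈ T, b l ≤ b i) = W} with hE
  have key : (fun b : Fin (n+1) → ℝ => eagerRev b r) = fun b =>
      ∑ T ∈ Finset.univ.powerset, ∑ W ∈ Finset.univ.powerset,
        Set.indicator (E T W) (f T W) b := by
    funext b
    set W0 : Finset (Fin (n+1)) := (F b).filter (fun i => ∀ l ∈ F b, b l ≤ b i) with hW0
    rw [Finset.sum_eq_single_of_mem (F b) (Finset.mem_powerset.mpr (Finset.filter_subset _ _))]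
    · rw [Finset.sum_eq_single_of_mem W0
        (Finset.mem_powerset.mpr ((Finset.filter_subset _ _).trans (Finset.filter_subset _ _)))]
      · rw [Set.indicator_of_mem (by exact ⟨rfl, rfl⟩)]
        rw [eagerRev]
        split_ifs with hS
        · have hW0ne : W0.Nonempty := by
            obtain ⟨i, hi, hmax⟩ := Finset.exists_max_image _ b hS
            exact ⟨i, Finset.mem_filter.mpr ⟨hi, hmax⟩⟩
          have hw : eagerWinner b r hS = W0.min' hW0ne := rfl
          rw [hf]
          simp only [dif_pos hW0ne]
          rw [hw]
        · have hFb : F b = ∅ := Finset.not_nonempty_iff_eq_empty.mp hS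
          have hW0e : ¬ W0.Nonempty := by
            rw [hW0, hFb]
            simp
          rw [hf]
          simp only [dif_neg hW0e]
      · intro W hW hne
        exact Set.indicator_of_notMem (fun hmem => hne (hmem.2.symm)) _
    · intro T hT hne
      rw [Finset.sum_eq_zero]
      intro W hW
      exact Set.indicator_of_notMem (fun hmem => hne (hmem.1.symm)) _
  rw [key]
  refine Finset.measurable_sum _ (fun T _ => Finset.measurable_sum _ (fun W _ => ?_))
  have hEmeas : MeasurableSet (E T W) := by
    have h1 : MeasurableSet {b : Fin (n+1) → ℝ | F b = T} := by
      have he : {b : Fin (n+1) → ℝ | F b = T} =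
          ⋂ i : Fin (n+1), {b | (i ∈ T) ↔ r i ≤ b i} := by
        ext b
        simp only [Set.mem_setOf_eq, Set.mem_iInter, hF, Finset.ext_iff, Finset.mem_filter,
          Finset.mem_univ, true_and]
        exact ⟨fun h i => (h i).symm, fun h i => (h i).symm⟩
      rw [he]
      exact MeasurableSet.iInter fun i => meas_iff_set
        (measurableSet_le measurable_const (measurable_pi_apply i)) _
    have h2 : MeasurableSet {b : Fin (n+1) → ℝ |
        T.filter (fun i => ∀ l ∈ T, b l ≤ b i) = W} := by
      have he : {b : Fin (n+1) → ℝ | T.filter (fun i => ∀ l ∈ T, b l ≤ b i) = W} =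
          ⋂ i : Fin (n+1), {b | (i ∈ W) ↔ (i ∈ T ∧ ∀ l ∈ T, b l ≤ b i)} := by
        ext b
        simp only [Set.mem_setOf_eq, Set.mem_iInter, Finset.ext_iff, Finset.mem_filter]
        exact ⟨fun h i => (h i).symm, fun h i => (h i).symm⟩
      rw [he]
      refine MeasurableSet.iInter fun i => meas_iff_set ?_ _
      by_cases hiT : i ∈ T
      · have : {b : Fin (n+1) → ℝ | i ∈ T ∧ ∀ l ∈ T, b l ≤ b i} =
            ⋂ l ∈ T, {b | b l ≤ b i} := by
          ext b; simp [hiT]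
        rw [this]
        exact MeasurableSet.biInter (Set.to_countable _) fun l _ =>
          measurableSet_le (measurable_pi_apply l) (measurable_pi_apply i)
      · have : {b : Fin (n+1) → ℝ | i ∈ T ∧ ∀ l ∈ T, b l ≤ b i} = ∅ := by
          ext b; simp [hiT]
        rw [this]; exact MeasurableSet.empty
    have : E T W = {b : Fin (n+1) → ℝ | F b = T} ∩
        {b : Fin (n+1) → ℝ | T.filter (fun i => ∀ l ∈ T, b l ≤ b i) = W} := rfl
    rw [this]; exact h1.inter h2
  refine Measurable.indicator ?_ hEmeas
  rw [hf]
  by_cases hW : W.Nonempty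
  · simp only [dif_pos hW]
    exact measurable_const.max (meas_fold _)
  · simp only [dif_neg hW]
    exact measurable_const

end meas

section meascomp
variable {n : ℕ}

lemma card_filter_lt {k : ℕ} (hk : k ≤ n + 1) :
    (Finset.univ.filter fun i : Fin (n+1) => (i:ℕ) < k).card = k := by
  refine Finset.card_eq_of_bijective (fun j hj => ⟨j, lt_of_lt_of_le hj hk⟩) ?_ ?_ ?_
  · intro a ha
    rw [Finset.mem_filter] at ha
    exact ⟨a, ha.2, by simp⟩
  · intro j hj
    simp [hj]
  · intro i j hi hj hij
    simpa [Fin.ext_iff] using hij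

lemma card_filter_ge {k : ℕ} (hk : k ≤ n + 1) :
    (Finset.univ.filter fun i : Fin (n+1) => k ≤ (i:ℕ)).card = n + 1 - k := by
  have h1 : (Finset.univ.filter fun i : Fin (n+1) => k ≤ (i:ℕ)) =
      Finset.univ.filter fun i : Fin (n+1) => ¬ ((i:ℕ) < k) := by
    apply Finset.filter_congr; intro i _; simp
  rw [h1, Finset.filter_not, Finset.card_sdiff_of_subset (Finset.filter_subset _ _),
    card_filter_lt hk, Finset.card_univ, Fintype.card_fin]

local notation "ν" => (volume.restrict (Set.Icc (0:ℝ) 1))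

lemma nu_Iic {p : ℝ} (hp : 0 ≤ p) (hp1 : p ≤ 1) : ν (Set.Iic p) = ENNReal.ofReal p := by
  rw [Measure.restrict_apply measurableSet_Iic]
  have h : Set.Iic p ∩ Set.Icc 0 1 = Set.Icc 0 p := by
    ext x
    simp only [Set.mem_inter_iff, Set.mem_Iic, Set.mem_Icc]
    exact ⟨fun ⟨h1, h2, _⟩ => ⟨h2, h1⟩, fun ⟨h1, h2⟩ => ⟨h2, h1, h2.trans hp1⟩⟩
  rw [h, Real.volume_Icc]
  norm_num

lemma nu_Ioi {p : ℝ} (hp : 0 ≤ p) : ν (Set.Ioi p) = ENNReal.ofReal (1 - p) := by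
  rw [Measure.restrict_apply measurableSet_Ioi]
  have h : Set.Ioi p ∩ Set.Icc 0 1 = Set.Ioc p 1 := by
    ext x
    simp only [Set.mem_inter_iff, Set.mem_Ioi, Set.mem_Icc, Set.mem_Ioc]
    exact ⟨fun ⟨h1, _, h3⟩ => ⟨h1, h3⟩, fun ⟨h1, h2⟩ => ⟨h1, le_trans hp h1.le, h2⟩⟩
  rw [h, Real.volume_Ioc]

lemma nu_Iio_half : ν (Set.Iio (1/2 : ℝ)) = ENNReal.ofReal (1/2) := by
  rw [Measure.restrict_apply measurableSet_Iio]
  have h : Set.Iio (1/2 : ℝ) ∩ Set.Icc 0 1 = Set.Ico 0 (1/2) := by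
    ext x
    simp only [Set.mem_inter_iff, Set.mem_Iio, Set.mem_Icc, Set.mem_Ico]
    constructor
    · rintro ⟨h1, h2, _⟩; exact ⟨h2, h1⟩
    · rintro ⟨h1, h2⟩; exact ⟨h2, h1, by linarith⟩
  rw [h, Real.volume_Ico]
  norm_num

instance : IsProbabilityMeasure (volume.restrict (Set.Icc (0:ℝ) 1)) := by
  constructor
  rw [Measure.restrict_apply_univ, Real.volume_Icc]
  norm_num

def GoodSet (n k : ℕ) (p : ℝ) : Set (Fin (n+1) → ℝ) :=
  {b | (∀ i : Fin (n+1), (i:ℕ) < k → b i < 1/2) ∧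
    ∀ i j : Fin (n+1), k ≤ (i:ℕ) → k ≤ (j:ℕ) → i ≠ j → b i ≤ p ∨ b j ≤ p}

lemma goodSet_eq (k : ℕ) (p : ℝ) :
    GoodSet n k p =
      (Set.univ.pi fun i : Fin (n+1) =>
        if (i:ℕ) < k then Set.Iio (1/2 : ℝ) else Set.Iic p) ∪
      ⋃ i0 ∈ (Finset.univ.filter fun i : Fin (n+1) => k ≤ (i:ℕ)),
        Set.univ.pi (fun i : Fin (n+1) =>
          if (i:ℕ) < k then Set.Iio (1/2 : ℝ) else if i = i0 then Set.Ioi p else Set.Iic p) := by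
  ext b
  constructor
  · rintro ⟨h1, h2⟩
    by_cases hall : ∀ i : Fin (n+1), k ≤ (i:ℕ) → b i ≤ p
    · left
      intro i _
      by_cases hik : (i:ℕ) < k
      · simpa [hik] using h1 i hik
      · simpa [hik] using hall i (Nat.not_lt.mp hik)
    · right
      push_neg at hall
      obtain ⟨i0, hi0k, hbi0⟩ := hall
      refine Set.mem_biUnion (Finset.mem_filter.mpr ⟨Finset.mem_univ _, hi0k⟩) ?_
      intro i _
      by_cases hik : (i:ℕ) < k
      · simpa [hik] using h1 i hik
      · by_cases hii0 : i = i0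
        · simp only [if_neg hik, if_pos hii0]
          rw [hii0]; exact hbi0
        · simp only [if_neg hik, if_neg hii0, Set.mem_Iic]
          rcases h2 i i0 (Nat.not_lt.mp hik) hi0k hii0 with h | h
          · exact h
          · exact absurd h (not_le.mpr hbi0)
  · rintro (h | h)
    · refine ⟨fun i hik => ?_, fun i j hik hjk hij => Or.inl ?_⟩
      · simpa [hik] using h i (Set.mem_univ i)
      · simpa [Nat.not_lt.mpr hik] using h i (Set.mem_univ i)
    · rw [Set.mem_iUnion₂] at h
      obtain ⟨i0, hi0, hpi⟩ := h
      refine ⟨fun i hik => ?_, fun i j hik hjk hij => ?_⟩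
      · simpa [hik] using hpi i (Set.mem_univ i)
      · by_cases hii0 : i = i0
        · right
          have hj := hpi j (Set.mem_univ j)
          have hji0 : j ≠ i0 := fun hh => hij (by rw [hii0, hh])
          simpa [Nat.not_lt.mpr hjk, hji0] using hj
        · left
          simpa [Nat.not_lt.mpr hik, hii0] using hpi i (Set.mem_univ i)

lemma measure_goodSet (k : ℕ) (hk : k ≤ n + 1) {p : ℝ} (hp : 0 ≤ p) (hp1 : p ≤ 1) :
    Measure.pi (fun _ : Fin (n+1) => ν) (GoodSet n k p) =
      ENNReal.ofReal (1/2) ^ k * ENNReal.ofReal p ^ (n+1-k) +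
      (n+1-k : ℕ) * (ENNReal.ofReal (1/2) ^ k * ENNReal.ofReal p ^ (n+1-k-1) *
        ENNReal.ofReal (1-p)) := by
  classical
  set U := Finset.univ.filter fun i : Fin (n+1) => k ≤ (i:ℕ) with hU
  set μ := Measure.pi (fun _ : Fin (n+1) => ν) with hμ
  set t0 : Fin (n+1) → Set ℝ := fun i => if (i:ℕ) < k then Set.Iio (1/2 : ℝ) else Set.Iic p with ht0
  set t : Fin (n+1) → Fin (n+1) → Set ℝ := fun i0 i =>
    if (i:ℕ) < k then Set.Iio (1/2 : ℝ) else if i = i0 then Set.Ioi p else Set.Iic p with ht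
  have hmeas0 : ∀ i, MeasurableSet (t0 i) := by
    intro i; simp only [ht0]; split_ifs
    · exact measurableSet_Iio
    · exact measurableSet_Iic
  have hmeast : ∀ i0 i, MeasurableSet (t i0 i) := by
    intro i0 i; simp only [ht]; split_ifs
    · exact measurableSet_Iio
    · exact measurableSet_Ioi
    · exact measurableSet_Iic
  rw [goodSet_eq k p]
  have hdisj2 : Set.PairwiseDisjoint (U : Set (Fin (n+1)))
      (fun i0 => Set.univ.pi (t i0)) := by
    intro i0 hi0 i1 hi1 hne
    rw [Function.onFun]
    refine Set.disjoint_left.mpr fun b hb0 hb1 => ?_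
    rw [Finset.coe_filter] at hi0 hi1
    have h0 := hb0 i0 (Set.mem_univ i0)
    have h1 := hb1 i0 (Set.mem_univ i0)
    have hi0k : ¬ ((i0:ℕ) < k) := Nat.not_lt.mpr hi0.2
    simp only [ht, if_neg hi0k, if_pos rfl] at h0
    simp only [ht, if_neg hi0k, if_neg (show i0 ≠ i1 from hne)] at h1
    exact absurd (Set.mem_Iic.mp h1) (not_le.mpr (Set.mem_Ioi.mp h0))
  have hdisj1 : Disjoint (Set.univ.pi t0)
      (⋃ i0 ∈ U, Set.univ.pi (t i0)) := by
    refine Set.disjoint_left.mpr fun b hb0 hb1 => ?_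
    rw [Set.mem_iUnion₂] at hb1
    obtain ⟨i0, hi0, hb1⟩ := hb1
    rw [hU, Finset.mem_filter] at hi0
    have h0 := hb0 i0 (Set.mem_univ i0)
    have h1 := hb1 i0 (Set.mem_univ i0)
    have hi0k : ¬ ((i0:ℕ) < k) := Nat.not_lt.mpr hi0.2
    simp only [ht0, if_neg hi0k] at h0
    simp only [ht, if_neg hi0k, if_pos rfl] at h1
    exact absurd (Set.mem_Iic.mp h0) (not_le.mpr (Set.mem_Ioi.mp h1))
  rw [measure_union hdisj1 (by
    exact MeasurableSet.biUnion (Finset.countable_toSet U)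
      fun i0 _ => MeasurableSet.univ_pi (hmeast i0))]
  rw [measure_biUnion_finset hdisj2 (fun i0 _ => MeasurableSet.univ_pi (hmeast i0))]
  have hcardU : U.card = n + 1 - k := card_filter_ge hk
  have h0 : μ (Set.univ.pi t0) = ENNReal.ofReal (1/2) ^ k * ENNReal.ofReal p ^ (n+1-k) := by
    rw [hμ, Measure.pi_pi]
    rw [← Finset.prod_filter_mul_prod_filter_not Finset.univ (fun i : Fin (n+1) => (i:ℕ) < k)]
    have e1 : ∀ i ∈ Finset.univ.filter (fun i : Fin (n+1) => (i:ℕ) < k),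
        ν (t0 i) = ENNReal.ofReal (1/2) := by
      intro i hi; rw [Finset.mem_filter] at hi
      simp only [ht0, if_pos hi.2]; exact nu_Iio_half
    have e2 : ∀ i ∈ Finset.univ.filter (fun i : Fin (n+1) => ¬ (i:ℕ) < k),
        ν (t0 i) = ENNReal.ofReal p := by
      intro i hi; rw [Finset.mem_filter] at hi
      simp only [ht0, if_neg hi.2]; exact nu_Iic hp hp1
    rw [Finset.prod_congr rfl e1, Finset.prod_congr rfl e2, Finset.prod_const,
      Finset.prod_const, card_filter_lt hk]
    congr 2
    rw [← hcardU, hU]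
    congr 1
    apply Finset.filter_congr; intro i _; simp
  have h1 : ∀ i0 ∈ U, μ (Set.univ.pi (t i0)) =
      ENNReal.ofReal (1/2) ^ k * ENNReal.ofReal p ^ (n+1-k-1) * ENNReal.ofReal (1-p) := by
    intro i0 hi0
    rw [hU, Finset.mem_filter] at hi0
    have hi0k : ¬ ((i0:ℕ) < k) := Nat.not_lt.mpr hi0.2
    rw [hμ, Measure.pi_pi]
    rw [← Finset.prod_filter_mul_prod_filter_not Finset.univ (fun i : Fin (n+1) => (i:ℕ) < k)]
    have e1 : ∀ i ∈ Finset.univ.filter (fun i : Fin (n+1) => (i:ℕ) < k),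
        ν (t i0 i) = ENNReal.ofReal (1/2) := by
      intro i hi; rw [Finset.mem_filter] at hi
      simp only [ht, if_pos hi.2]; exact nu_Iio_half
    rw [Finset.prod_congr rfl e1, Finset.prod_const, card_filter_lt hk]
    have hmem : i0 ∈ Finset.univ.filter (fun i : Fin (n+1) => ¬ (i:ℕ) < k) :=
      Finset.mem_filter.mpr ⟨Finset.mem_univ _, hi0k⟩
    rw [← Finset.mul_prod_erase _ _ hmem]
    have e2 : ∀ i ∈ (Finset.univ.filter (fun i : Fin (n+1) => ¬ (i:ℕ) < k)).erase i0,
        ν (t i0 i) = ENNReal.ofReal p := by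
      intro i hi
      rw [Finset.mem_erase] at hi
      have := Finset.mem_filter.mp hi.2
      simp only [ht, if_neg this.2, if_neg hi.1]; exact nu_Iic hp hp1
    rw [Finset.prod_congr rfl e2, Finset.prod_const]
    have : ν (t i0 i0) = ENNReal.ofReal (1-p) := by
      simp only [ht, if_neg hi0k, if_pos rfl]; exact nu_Ioi hp
    rw [this, Finset.card_erase_of_mem hmem]
    have hcard' : (Finset.univ.filter (fun i : Fin (n+1) => ¬ (i:ℕ) < k)).card = n + 1 - k := by
      rw [← hcardU, hU]
      congr 1
      apply Finset.filter_congr; intro i _; simp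
    rw [hcard']
    ring
  rw [h0, Finset.sum_congr rfl h1, Finset.sum_const, hcardU]
  rw [nsmul_eq_mul]

section dist
variable {n : ℕ}

local notation "ν" => (volume.restrict (Set.Icc (0:ℝ) 1))
local notation "μpi" => (Measure.pi fun _ : Fin (n+1) => (volume.restrict (Set.Icc (0:ℝ) 1)))

lemma eagerRev_nonneg {b r : Fin (n+1) → ℝ} : 0 ≤ eagerRev b r := by
  rw [eagerRev]
  split_ifs with hS
  · exact le_trans (by rw [Finset.le_fold_max]; exact Or.inl le_rfl) (le_max_right _ _)
  · exact le_rfl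

lemma ae_box : ∀ᵐ b ∂(μpi), ∀ i, 0 ≤ b i ∧ b i ≤ 1 := by
  rw [MeasureTheory.ae_all_iff]
  intro i
  rw [MeasureTheory.ae_iff]
  have he : {b : Fin (n+1) → ℝ | ¬ (0 ≤ b i ∧ b i ≤ 1)} =
      Set.univ.pi (fun j => if j = i then (Set.Icc (0:ℝ) 1)ᶜ else Set.univ) := by
    ext b
    simp only [Set.mem_setOf_eq, Set.mem_pi, Set.mem_univ, true_implies]
    constructor
    · intro h j
      by_cases hj : j = i
      · subst hj; simp only [if_pos rfl, Set.mem_compl_iff, Set.mem_Icc]; exact h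
      · simp [hj]
    · intro h
      have := h i
      simpa [Set.mem_Icc] using this
  rw [he, Measure.pi_pi]
  refine Finset.prod_eq_zero (Finset.mem_univ i) ?_
  rw [if_pos rfl, Measure.restrict_apply (measurableSet_Icc.compl)]
  simp

noncomputable def gpoly (n k : ℕ) (t : ℝ) : ℝ :=
  (1/2)^k * t^(n+1-k) + (n+1-k : ℕ) * ((1/2)^k * t^(n+1-k-1) * (1-t))

lemma measure_goodSet_ofReal (k : ℕ) (hk : k ≤ n + 1) {t : ℝ} (ht : 0 ≤ t) (ht1 : t ≤ 1) :
    μpi (GoodSet n k t) = ENNReal.ofReal (gpoly n k t) := by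
  rw [measure_goodSet k hk ht ht1, gpoly]
  have h1t : (0:ℝ) ≤ 1 - t := by linarith
  have hterm2 : (0:ℝ) ≤ ((n+1-k : ℕ) : ℝ) * ((1/2)^k * t^(n+1-k-1) * (1-t)) :=
    mul_nonneg (Nat.cast_nonneg _) (mul_nonneg (mul_nonneg (by positivity) (by positivity)) h1t)
  rw [ENNReal.ofReal_add (by positivity) hterm2]
  congr 1
  · rw [ENNReal.ofReal_mul (by positivity), ENNReal.ofReal_pow (by norm_num),
      ENNReal.ofReal_pow ht]
  · rw [ENNReal.ofReal_mul (by positivity), ENNReal.ofReal_mul (by positivity),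
      ENNReal.ofReal_mul (by positivity), ENNReal.ofReal_natCast,
      ENNReal.ofReal_pow (by norm_num), ENNReal.ofReal_pow ht]

lemma gpoly_nonneg {k : ℕ} {t : ℝ} (ht : 0 ≤ t) (ht1 : t ≤ 1) : 0 ≤ gpoly n k t := by
  have h1t : (0:ℝ) ≤ 1 - t := by linarith
  rw [gpoly]
  exact add_nonneg (by positivity)
    (mul_nonneg (Nat.cast_nonneg _) (mul_nonneg (mul_nonneg (by positivity) (by positivity)) h1t))

lemma gpoly_le_one (k : ℕ) (hk : k ≤ n + 1) {t : ℝ} (ht : 0 ≤ t) (ht1 : t ≤ 1) :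
    gpoly n k t ≤ 1 := by
  rw [← ENNReal.ofReal_le_one, ← measure_goodSet_ofReal k hk ht ht1]
  exact prob_le_one

lemma measure_rev_gt (k : ℕ) (hk : k ≤ n + 1) {t : ℝ} (ht : 0 < t) :
    μpi {b | t < eagerRev b (fun i => if (i : ℕ) < k then (1/2 : ℝ) else 0)} =
      if t < 1/2 then ENNReal.ofReal (1 - gpoly n k t)
      else if t < 1 then ENNReal.ofReal (1 - gpoly n 0 t) else 0 := by
  set r : Fin (n+1) → ℝ := fun i => if (i : ℕ) < k then (1/2 : ℝ) else 0 with hr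
  have hmeas : MeasurableSet {b : Fin (n+1) → ℝ | eagerRev b r ≤ t} :=
    measurableSet_le (measurable_eagerRev r) measurable_const
  have hcompl : {b : Fin (n+1) → ℝ | t < eagerRev b r} = {b | eagerRev b r ≤ t}ᶜ := by
    ext b; simp [not_le]
  by_cases h1 : t < 1/2
  · rw [if_pos h1, hcompl, measure_compl hmeas (measure_ne_top _ _)]
    have hGe : {b : Fin (n+1) → ℝ | eagerRev b r ≤ t} =ᵐ[μpi] GoodSet n k t := by
      filter_upwards [ae_box] with b hb
      have := charLow (n := n) (k := k) (b := b) (fun i => (hb i).1) ht.le h1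
      simp only [eq_iff_iff]
      exact this
    rw [measure_congr hGe, measure_goodSet_ofReal k hk ht.le (by linarith), measure_univ,
      ← ENNReal.ofReal_one, ← ENNReal.ofReal_sub _ (gpoly_nonneg ht.le (by linarith))]
  · push_neg at h1
    by_cases h2 : t < 1
    · rw [if_neg (not_lt.mpr h1), if_pos h2, hcompl, measure_compl hmeas (measure_ne_top _ _)]
      have hGe : {b : Fin (n+1) → ℝ | eagerRev b r ≤ t} =ᵐ[μpi] GoodSet n 0 t := by
        filter_upwards [ae_box] with b hb
        have := charHigh (n := n) (k := k) (b := b) (fun i => (hb i).1) h1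
        simp only [eq_iff_iff]
        show eagerRev b r ≤ t ↔ b ∈ GoodSet n 0 t
        constructor
        · intro h
          exact ⟨fun i hik => absurd hik (Nat.not_lt_zero _),
            fun i j _ _ hij => this.mp h i j hij⟩
        · intro h
          exact this.mpr (fun i j hij => h.2 i j (Nat.zero_le _) (Nat.zero_le _) hij)
      rw [measure_congr hGe, measure_goodSet_ofReal 0 (Nat.zero_le _) ht.le h2.le, measure_univ,
        ← ENNReal.ofReal_one, ← ENNReal.ofReal_sub _ (gpoly_nonneg ht.le h2.le)]
    · push_neg at h2
      rw [if_neg (not_lt.mpr h1), if_neg (not_lt.mpr h2)]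
      rw [MeasureTheory.measure_eq_zero_iff_ae_notMem]
      filter_upwards [ae_box] with b hb
      simp only [Set.mem_setOf_eq, not_lt]
      refine eagerRev_le ht.le (fun hS => ?_) (fun hS i hri hiw => le_trans (hb i).2 h2)
      refine le_trans ?_ h2
      show (if ((eagerWinner b r hS : Fin (n+1)) : ℕ) < k then (1/2:ℝ) else 0) ≤ 1
      split_ifs
      · linarith
      · linarith

end dist

theorem eager_ab_testing_uniform {n : ℕ} (k : ℕ) (hk : k ≤ n + 1) :
    ∫⁻ b, ENNReal.ofReal (eagerRev b fun i => if (i : ℕ) < k then (1/2 : ℝ) else 0)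
        ∂(Measure.pi fun _ : Fin (n + 1) => volume.restrict (Set.Icc (0:ℝ) 1)) =
      ENNReal.ofReal
        (((n + 1 : ℝ) + (2:ℝ) ^ (-(n + 1 : ℤ)) - 1) / ((n + 1 : ℝ) + 1) -
          (if k < n + 1 then (2:ℝ) ^ (-(n + 1 : ℤ)) / ((n + 1 : ℝ) - (k : ℝ) + 1) else 0)) := by
  classical
  set r : Fin (n+1) → ℝ := fun i => if (i:ℕ) < k then (1/2:ℝ) else 0 with hr
  set μ := Measure.pi fun _ : Fin (n + 1) => volume.restrict (Set.Icc (0:ℝ) 1) with hμ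
  rw [lintegral_eq_lintegral_meas_lt μ (Filter.Eventually.of_forall fun b => eagerRev_nonneg)
    (measurable_eagerRev r).aemeasurable]
  have hsplit : Set.Ioi (0:ℝ) = (Set.Ioc 0 (1/2) ∪ Set.Ioc (1/2) 1) ∪ Set.Ioi 1 := by
    rw [Set.Ioc_union_Ioc_eq_Ioc (by norm_num) (by norm_num), Set.Ioc_union_Ioi_eq_Ioi
      (by norm_num)]
  have d1 : Disjoint (Set.Ioc (0:ℝ) (1/2)) (Set.Ioc (1/2) 1) := by
    refine Set.disjoint_left.mpr fun x hx hx' => ?_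
    exact absurd hx.2 (not_le.mpr hx'.1)
  have d2 : Disjoint (Set.Ioc (0:ℝ) (1/2) ∪ Set.Ioc (1/2) 1) (Set.Ioi 1) := by
    refine Set.disjoint_left.mpr fun x hx hx' => ?_
    rw [Set.mem_Ioi] at hx'
    rcases hx with h | h
    · have := h.2; rw [Set.mem_Ioc] at *; linarith
    · have := h.2; linarith
  rw [hsplit, lintegral_union measurableSet_Ioi d2,
    lintegral_union measurableSet_Ioc d1]
  -- ae avoid endpoints
  have ae_ne : ∀ c : ℝ, ∀ᵐ t : ℝ, t ≠ c := by
    intro c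
    have := MeasureTheory.measure_eq_zero_iff_ae_notMem.mp (Real.volume_singleton (a := c))
    filter_upwards [this] with t ht
    simpa using ht
  -- Piece 3
  have P3 : ∫⁻ t in Set.Ioi (1:ℝ), μ {a | t < eagerRev a r} = 0 := by
    rw [setLIntegral_congr_fun measurableSet_Ioi
      (fun t (ht : t ∈ Set.Ioi (1:ℝ)) => ?_), lintegral_zero]
    rw [Set.mem_Ioi] at ht
    rw [measure_rev_gt k hk (by linarith), if_neg (by linarith), if_neg (by linarith)]
  -- generic piece conversion
  have conv : ∀ (k' : ℕ), k' ≤ n + 1 → ∀ a c : ℝ, 0 ≤ a → a ≤ c → c ≤ 1 →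
      (∀ᵐ t : ℝ, t ∈ Set.Ioc a c → μ {x | t < eagerRev x r} = ENNReal.ofReal (1 - gpoly n k' t)) →
      ∫⁻ t in Set.Ioc a c, μ {x | t < eagerRev x r} =
        ENNReal.ofReal (∫ t in a..c, (1 - gpoly n k' t)) := by
    intro k' hk' a c ha hac hc1 hcongr
    have hcont : Continuous fun t : ℝ => 1 - gpoly n k' t := by
      unfold gpoly; fun_prop
    have hint : Integrable (fun t : ℝ => 1 - gpoly n k' t)
        (volume.restrict (Set.Ioc a c)) := hcont.integrableOn_Ioc
    have hnn : 0 ≤ᵐ[volume.restrict (Set.Ioc a c)] fun t : ℝ => 1 - gpoly n k' t := by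
      refine (ae_restrict_iff' measurableSet_Ioc).mpr (Filter.Eventually.of_forall fun t ht => ?_)
      rw [Set.mem_Ioc] at ht
      have := gpoly_le_one (n := n) k' hk' (le_trans ha ht.1.le) (le_trans ht.2 hc1)
      simp only [Pi.zero_apply]
      linarith
    rw [intervalIntegral.integral_of_le hac]
    exact (setLIntegral_congr_fun_ae measurableSet_Ioc hcongr).trans
      (ofReal_integral_eq_lintegral_ofReal hint hnn).symm
  have P1 : ∫⁻ t in Set.Ioc (0:ℝ) (1/2), μ {a | t < eagerRev a r} =
      ENNReal.ofReal (∫ t in (0:ℝ)..(1/2), (1 - gpoly n k t)) := by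
    refine conv k hk 0 (1/2) le_rfl (by norm_num) (by norm_num) ?_
    filter_upwards [ae_ne (1/2)] with t htne ht
    rw [Set.mem_Ioc] at ht
    have htlt : t < 1/2 := lt_of_le_of_ne ht.2 htne
    rw [measure_rev_gt k hk ht.1, if_pos htlt]
  have P2 : ∫⁻ t in Set.Ioc (1/2:ℝ) 1, μ {a | t < eagerRev a r} =
      ENNReal.ofReal (∫ t in (1/2:ℝ)..1, (1 - gpoly n 0 t)) := by
    refine conv 0 (Nat.zero_le _) (1/2) 1 (by norm_num) (by norm_num) le_rfl ?_
    filter_upwards [ae_ne 1] with t htne ht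
    rw [Set.mem_Ioc] at ht
    have htlt : t < 1 := lt_of_le_of_ne ht.2 htne
    rw [measure_rev_gt k hk (by linarith [ht.1]), if_neg (by linarith [ht.1]), if_pos htlt]
  rw [P1, P2, P3, add_zero]
  -- interval integral computation
  have hiipow : ∀ (c : ℝ) (e : ℕ) (a b : ℝ), IntervalIntegrable (fun t => c * t^e) volume a b :=
    fun c e a b => (continuous_const.mul (continuous_pow e)).intervalIntegrable a b
  have key : ∀ (k' : ℕ), k' ≤ n → ∀ a b : ℝ, (∫ t in a..b, (1 - gpoly n k' t)) =
      (b - a) + (((((n - k' : ℕ)):ℝ) + 1) * (1/2)^k' - (1/2)^k') *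
          ((b ^ (n - k' + 1 + 1) - a ^ (n - k' + 1 + 1)) / ((((n - k' + 1 : ℕ)):ℝ) + 1)) +
        (-((((n - k' : ℕ)):ℝ) + 1) * (1/2)^k') *
          ((b ^ (n - k' + 1) - a ^ (n - k' + 1)) / ((((n - k' : ℕ)):ℝ) + 1)) := by
    intro k' hk' a b
    have he : (fun t : ℝ => 1 - gpoly n k' t) = fun t =>
        1 + (((((n - k' : ℕ)):ℝ) + 1) * (1/2)^k' - (1/2)^k') * t ^ (n - k' + 1) +
          (-((((n - k' : ℕ)):ℝ) + 1) * (1/2)^k') * t ^ (n - k') := by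
      funext t
      rw [gpoly]
      have e1 : n + 1 - k' = n - k' + 1 := by omega
      have e2 : n + 1 - k' - 1 = n - k' := by omega
      rw [e2, e1]
      push_cast
      ring
    rw [he]
    rw [intervalIntegral.integral_add (IntervalIntegrable.add
        intervalIntegrable_const (hiipow _ _ _ _)) (hiipow _ _ _ _),
      intervalIntegral.integral_add intervalIntegrable_const (hiipow _ _ _ _),
      intervalIntegral.integral_const, intervalIntegral.integral_const_mul,
      intervalIntegral.integral_const_mul, integral_pow, integral_pow]
    simp only [smul_eq_mul, mul_one]
  -- combine to single ofReal
  have hI1nn : 0 ≤ ∫ t in (0:ℝ)..(1/2), (1 - gpoly n k t) := by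
    refine intervalIntegral.integral_nonneg (by norm_num) fun u hu => ?_
    have := gpoly_le_one (n := n) k hk hu.1 (le_trans hu.2 (by norm_num))
    linarith
  rw [← ENNReal.ofReal_add hI1nn (by
    refine intervalIntegral.integral_nonneg (by norm_num) fun u hu => ?_
    have := gpoly_le_one (n := n) 0 (Nat.zero_le _) (le_trans (by norm_num) hu.1) hu.2
    linarith)]
  congr 1
  -- final real computation
  have h2pow : (2:ℝ) ^ (-(n + 1 : ℤ)) = (1/2)^(n+1) := by
    have hcast : (-(n + 1 : ℤ)) = -((n + 1 : ℕ) : ℤ) := by push_cast; ring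
    rw [hcast, zpow_neg, zpow_natCast, one_div, inv_pow]
  have hNk : ((n:ℝ) + 1) ≠ 0 := by positivity
  have hNk2 : ((n:ℝ) + 2) ≠ 0 := by positivity
  by_cases hkn : k ≤ n
  · -- case k ≤ n
    rw [key k hkn 0 (1/2), key 0 (Nat.zero_le _) (1/2) 1, if_pos (by omega)]
    have hcast1 : ((n - k : ℕ):ℝ) = (n:ℝ) - (k:ℝ) := by
      rw [Nat.cast_sub hkn]
    have hcast2 : ((n - k + 1 : ℕ):ℝ) = (n:ℝ) - (k:ℝ) + 1 := by
      rw [Nat.cast_add, Nat.cast_one, hcast1]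
    have hz1 : (0:ℝ)^(n-k+1+1) = 0 := zero_pow (by omega)
    have hz2 : (0:ℝ)^(n-k+1) = 0 := zero_pow (by omega)
    have hsp2 : (1/2:ℝ)^(n-k+1+1) = (1/2)^(n-k+1) * (1/2) := by rw [pow_succ]
    have hsp3 : (1/2:ℝ)^(n+1+1) = (1/2)^(n+1) * (1/2) := by rw [pow_succ]
    have hsp : (1/2:ℝ)^(n+1) = (1/2)^k * (1/2)^(n-k+1) := by
      rw [← pow_add]; congr 1; omega
    have hNK : (0:ℝ) ≤ (n:ℝ) - (k:ℝ) := by rw [← hcast1]; positivity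
    have hd1 : ((n:ℝ) - (k:ℝ) + 1) ≠ 0 := by linarith
    have hd2 : ((n:ℝ) - (k:ℝ) + 2) ≠ 0 := by linarith
    have hd1' : (1 + ((n:ℝ) - (k:ℝ))) ≠ 0 := by linarith
    have hd2' : (2 + ((n:ℝ) - (k:ℝ))) ≠ 0 := by linarith
    have hN1 : ((n:ℝ) + 1) ≠ 0 := by positivity
    have hN2 : ((n:ℝ) + 2) ≠ 0 := by positivity
    simp only [Nat.sub_zero, hz1, hz2, h2pow, hsp2, hsp3, hsp, hcast1, hcast2,
      Nat.cast_zero, pow_zero, one_pow, one_mul, mul_one]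
    push_cast
    generalize ((1:ℝ)/2)^k = A
    generalize ((1:ℝ)/2)^(n-k+1) = B
    field_simp [hd1', hd2', (by linarith : ((n:ℝ) + 1 - (k:ℝ) + 1) ≠ 0)]
    ring
  · -- case k = n+1
    have hkeq : k = n + 1 := by omega
    subst hkeq
    rw [if_neg (by omega)]
    have hg : ∀ t : ℝ, gpoly n (n+1) t = (1/2)^(n+1) := by
      intro t
      rw [gpoly]
      simp [Nat.sub_self]
    have hI1 : (∫ t in (0:ℝ)..(1/2), (1 - gpoly n (n+1) t)) = (1/2) * (1 - (1/2)^(n+1)) := by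
      have he : (fun t : ℝ => 1 - gpoly n (n+1) t) = fun _ => 1 - (1/2:ℝ)^(n+1) := by
        funext t; rw [hg]
      rw [he, intervalIntegral.integral_const, smul_eq_mul]
      ring
    rw [hI1, key 0 (Nat.zero_le _) (1/2) 1]
    have hsp3 : (1/2:ℝ)^(n+1+1) = (1/2)^(n+1) * (1/2) := by rw [pow_succ]
    have hN1 : ((n:ℝ) + 1) ≠ 0 := by positivity
    have hN2 : ((n:ℝ) + 2) ≠ 0 := by positivity
    simp only [Nat.sub_zero, h2pow, hsp3, Nat.cast_zero, pow_zero, one_pow, one_mul, mul_one,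
      sub_zero]
    push_cast
    generalize ((1:ℝ)/2)^(n+1) = C
    field_simp
    ring
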